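/- arXiv:1403.5648 — 6 statements merged into one kernel-verified Lean document; each statement's English description precedes it below -/
import Mathlib

section
/- The function f(β) = √((1-β)P_p)·|h_p| + √(P_{s0} + β·η·P_p)·‖h_sp‖ on [0,1] attains its maximum at β* = clamp((P_p·η²·‖h_sp‖² − P_{s0}·|h_p|²)/(P_p·η²·‖h_sp‖² + η·P_p·|h_p|²), 0, 1). -/
/-- Monotone (boundary) case: if the tangency inequality holds at the left
endpoint, the combined amplitude is maximized there. -/
lemma aux_bdry (hp hsp η u v U V : ℝ) (hhp : 0 ≤ hp) (hhsp : 0 ≤ hsp) (hη : 0 < η)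
    (hu0 : 0 ≤ u) (hV0 : 0 < V) (huU : u ≤ U) (hvV : V ≤ v)
    (hkey : η * hsp * U ≤ hp * V)
    (hquad : v ^ 2 - V ^ 2 = η * (U ^ 2 - u ^ 2)) :
    u * hp + v * hsp ≤ U * hp + V * hsp := by
  have h1 : η * hsp * u ≤ hp * v :=
    calc η * hsp * u ≤ η * hsp * U := mul_le_mul_of_nonneg_left huU (by positivity)
      _ ≤ hp * V := hkey
      _ ≤ hp * v := mul_le_mul_of_nonneg_left hvV hhp
  have t1 : 0 ≤ (U - u) * (hp * V - η * hsp * U) :=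
    mul_nonneg (sub_nonneg.2 huU) (sub_nonneg.2 hkey)
  have t2 : 0 ≤ (U - u) * (hp * v - η * hsp * u) :=
    mul_nonneg (sub_nonneg.2 huU) (sub_nonneg.2 h1)
  have h2 : hsp * (v - V) * (v + V) ≤ hp * (U - u) * (V + v) := by
    nlinarith [t1, t2, mul_nonneg hhsp (sub_nonneg.2 hvV)]
  have hVv : 0 < V + v := by linarith
  nlinarith [h2, hVv]

/-- Tangency (interior) case: at a point where `hp * V = η * hsp * U`,
Cauchy–Schwarz gives the maximum subject to `η u² + v²` constant. -/
lemma aux_int (hp hsp η u v U V : ℝ) (hhp : 0 ≤ hp) (hhsp : 0 ≤ hsp) (hη : 0 < η)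
    (hV0 : 0 < V)
    (htan : hp * V = η * hsp * U)
    (hK : η * u ^ 2 + v ^ 2 = η * U ^ 2 + V ^ 2) :
    u * hp + v * hsp ≤ U * hp + V * hsp := by
  have e1 : hp * V * U = η * hsp * U * U := by rw [htan]
  have e2 : hp * V * u = η * hsp * U * u := by rw [htan]
  have t1 : 0 ≤ hsp * η * (U - u) ^ 2 :=
    mul_nonneg (mul_nonneg hhsp hη.le) (sq_nonneg (U - u))
  have t2 : 0 ≤ hsp * (V - v) ^ 2 := mul_nonneg hhsp (sq_nonneg (V - v))
  have hmul : 0 ≤ (U * hp + V * hsp - u * hp - v * hsp) * V := by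
    nlinarith [t1, t2, e1, e2, mul_nonneg hhsp (sq_nonneg u)]
  nlinarith [hmul, hV0]

set_option maxHeartbeats 1000000 in
theorem stmt_0 (Pp Ps0 η hp hsp : ℝ)
    (hPp : 0 < Pp) (hPs0 : 0 < Ps0) (hη : 0 < η)
    (hhp : 0 ≤ hp) (hhsp : 0 ≤ hsp) :
    IsMaxOn
      (fun β : ℝ => Real.sqrt ((1 - β) * Pp) * hp + Real.sqrt (Ps0 + β * η * Pp) * hsp)
      (Set.Icc 0 1)
      (min 1 (max 0 ((Pp * η ^ 2 * hsp ^ 2 - Ps0 * hp ^ 2) /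
        (Pp * η ^ 2 * hsp ^ 2 + η * Pp * hp ^ 2)))) := by
  set N := Pp * η ^ 2 * hsp ^ 2 - Ps0 * hp ^ 2 with hN
  set D := Pp * η ^ 2 * hsp ^ 2 + η * Pp * hp ^ 2 with hD
  intro β hβ
  obtain ⟨hβ0, hβ1⟩ := hβ
  simp only [Set.mem_setOf_eq]
  have hβη : 0 ≤ β * η * Pp := by positivity
  have h1β : 0 ≤ (1 - β) * Pp := mul_nonneg (by linarith) hPp.le
  set u := Real.sqrt ((1 - β) * Pp) with hu
  set v := Real.sqrt (Ps0 + β * η * Pp) with hv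
  have hu0 : 0 ≤ u := Real.sqrt_nonneg _
  have hv0 : 0 ≤ v := Real.sqrt_nonneg _
  have hus : u ^ 2 = (1 - β) * Pp := Real.sq_sqrt h1β
  have hvs : v ^ 2 = Ps0 + β * η * Pp := Real.sq_sqrt (by linarith)
  rcases le_or_gt N 0 with hNle | hNpos
  · -- clamp to 0
    have hbd : min 1 (max 0 (N / D)) = 0 := by
      rcases eq_or_lt_of_le (by positivity : (0:ℝ) ≤ D) with hD0 | hD0
      · rw [← hD0]; simp
      · have : N / D ≤ 0 := div_nonpos_of_nonpos_of_nonneg hNle hD0.le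
        rw [max_eq_left this, min_eq_right zero_le_one]
    rw [hbd]
    simp only [sub_zero, one_mul, zero_mul, add_zero]
    set U := Real.sqrt Pp with hU
    set V := Real.sqrt Ps0 with hV
    have hU0 : 0 ≤ U := Real.sqrt_nonneg _
    have hV0 : 0 < V := Real.sqrt_pos.2 hPs0
    have hUs : U ^ 2 = Pp := Real.sq_sqrt hPp.le
    have hVs : V ^ 2 = Ps0 := Real.sq_sqrt hPs0.le
    have huU : u ≤ U := Real.sqrt_le_sqrt (by nlinarith [mul_nonneg hβ0 hPp.le])
    have hvV : V ≤ v := Real.sqrt_le_sqrt (by linarith)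
    have hquad : v ^ 2 - V ^ 2 = η * (U ^ 2 - u ^ 2) := by
      rw [hus, hvs, hUs, hVs]; ring
    have hkey : η * hsp * U ≤ hp * V := by
      have hsq : (η * hsp * U) ^ 2 ≤ (hp * V) ^ 2 := by
        rw [mul_pow, mul_pow, mul_pow, hUs, hVs]
        have : Pp * η ^ 2 * hsp ^ 2 ≤ Ps0 * hp ^ 2 := by rw [hN] at hNle; linarith
        linarith [this]
      calc η * hsp * U = Real.sqrt ((η * hsp * U) ^ 2) :=
            (Real.sqrt_sq (by positivity)).symm
        _ ≤ Real.sqrt ((hp * V) ^ 2) := Real.sqrt_le_sqrt hsq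
        _ = hp * V := Real.sqrt_sq (by positivity)
    exact aux_bdry hp hsp η u v U V hhp hhsp hη hu0 hV0 huU hvV hkey hquad
  · -- interior case: β* = N / D
    have hhsp' : 0 < hsp := by
      rcases eq_or_lt_of_le hhsp with h | h
      · exfalso
        rw [hN] at hNpos
        rw [← h] at hNpos
        nlinarith [mul_nonneg hPs0.le (sq_nonneg hp)]
      · exact h
    have hDpos : 0 < D := by positivity
    have hNDle : N / D ≤ 1 := by
      rw [div_le_one hDpos, hN, hD]
      nlinarith [mul_nonneg hPs0.le (sq_nonneg hp), mul_nonneg (mul_nonneg hη.le hPp.le) (sq_nonneg hp)]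
    have hND0 : 0 ≤ N / D := le_of_lt (div_pos hNpos hDpos)
    have hbd : min 1 (max 0 (N / D)) = N / D := by
      rw [max_eq_right hND0, min_eq_right hNDle]
    rw [hbd]
    set b := N / D with hb
    have hb0 : 0 ≤ b := hND0
    have hb1 : b ≤ 1 := hNDle
    have h1b : 0 ≤ (1 - b) * Pp := mul_nonneg (by linarith) hPp.le
    have hbη : 0 ≤ b * η * Pp := by positivity
    set U := Real.sqrt ((1 - b) * Pp) with hU
    set V := Real.sqrt (Ps0 + b * η * Pp) with hV
    have hU0 : 0 ≤ U := Real.sqrt_nonneg _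
    have hUs : U ^ 2 = (1 - b) * Pp := Real.sq_sqrt h1b
    have hVs : V ^ 2 = Ps0 + b * η * Pp := Real.sq_sqrt (by linarith)
    have hV0 : 0 < V := Real.sqrt_pos.2 (by linarith)
    -- tangency: hp * V = η * hsp * U
    have hpoly : hp ^ 2 * (Ps0 + b * η * Pp) = η ^ 2 * hsp ^ 2 * ((1 - b) * Pp) := by
      have hDne : D ≠ 0 := hDpos.ne'
      rw [hb]
      field_simp
      rw [hN, hD]
      ring
    have hsqeq : (hp * V) ^ 2 = (η * hsp * U) ^ 2 := by
      calc (hp * V) ^ 2 = hp ^ 2 * (Ps0 + b * η * Pp) := by rw [mul_pow, hVs]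
        _ = η ^ 2 * hsp ^ 2 * ((1 - b) * Pp) := hpoly
        _ = (η * hsp * U) ^ 2 := by rw [mul_pow, mul_pow, hUs]
    have htan : hp * V = η * hsp * U := by
      calc hp * V = Real.sqrt ((hp * V) ^ 2) := (Real.sqrt_sq (by positivity)).symm
        _ = Real.sqrt ((η * hsp * U) ^ 2) := by rw [hsqeq]
        _ = η * hsp * U := Real.sqrt_sq (by positivity)
    have hK : η * u ^ 2 + v ^ 2 = η * U ^ 2 + V ^ 2 := by
      rw [hus, hvs, hUs, hVs]; ring
    exact aux_int hp hsp η u v U V hhp hhsp hη hV0 htan hK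
end

section
/- If P_p·η²·‖h_sp‖² < P_{s0}·|h_p|², then the maximum of f(β) = √((1-β)P_p)·|h_p| + √(P_{s0} + β·η·P_p)·‖h_sp‖ over β ∈ [0,1] is attained at β = 0, with value √(P_p)·|h_p| + √(P_{s0})·‖h_sp‖. -/
theorem stmt_1 (Pp Ps0 η hp hsp : ℝ)
    (hPp : 0 < Pp) (hPs0 : 0 < Ps0) (hη : 0 < η)
    (hhp : 0 < hp) (hhsp : 0 < hsp)
    (hcond : Pp * η ^ 2 * hsp ^ 2 < Ps0 * hp ^ 2) :
    IsMaxOn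
      (fun β : ℝ => Real.sqrt ((1 - β) * Pp) * hp + Real.sqrt (Ps0 + β * η * Pp) * hsp)
      (Set.Icc 0 1) 0 ∧
    Real.sqrt ((1 - 0) * Pp) * hp + Real.sqrt (Ps0 + 0 * η * Pp) * hsp
      = Real.sqrt Pp * hp + Real.sqrt Ps0 * hsp := by
  constructor
  · intro β hβ
    obtain ⟨hβ0, hβ1⟩ := hβ
    simp only [Set.mem_setOf_eq, sub_zero, one_mul, zero_mul, add_zero]
    have h1β : 0 ≤ (1 - β) * Pp := by nlinarith
    have hβη : 0 ≤ β * η * Pp := by positivity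
    obtain ⟨a, ha⟩ : ∃ a, a = Real.sqrt ((1 - β) * Pp) := ⟨_, rfl⟩
    obtain ⟨b, hb⟩ : ∃ b, b = Real.sqrt Pp := ⟨_, rfl⟩
    obtain ⟨c, hc⟩ : ∃ c, c = Real.sqrt Ps0 := ⟨_, rfl⟩
    obtain ⟨d, hd⟩ : ∃ d, d = Real.sqrt (Ps0 + β * η * Pp) := ⟨_, rfl⟩
    rw [← ha, ← hb, ← hc, ← hd]
    have ha0 : 0 ≤ a := ha ▸ Real.sqrt_nonneg _
    have hb0 : 0 < b := hb ▸ Real.sqrt_pos.2 hPp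
    have hc0 : 0 < c := hc ▸ Real.sqrt_pos.2 hPs0
    have hd0 : 0 ≤ d := hd ▸ Real.sqrt_nonneg _
    have ha2 : a ^ 2 = (1 - β) * Pp := by rw [ha, Real.sq_sqrt h1β]
    have hb2 : b ^ 2 = Pp := by rw [hb, Real.sq_sqrt hPp.le]
    have hc2 : c ^ 2 = Ps0 := by rw [hc, Real.sq_sqrt hPs0.le]
    have hd2 : d ^ 2 = Ps0 + β * η * Pp := by
      rw [hd, Real.sq_sqrt (by linarith)]
    have hab : a ≤ b := by
      rw [ha, hb]; apply Real.sqrt_le_sqrt; nlinarith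
    have hcd : c ≤ d := by
      rw [hc, hd]; apply Real.sqrt_le_sqrt; linarith
    have key : η * hsp * b < hp * c := by
      have h1 : (η * hsp * b) ^ 2 < (hp * c) ^ 2 := by
        calc (η * hsp * b) ^ 2 = Pp * η ^ 2 * hsp ^ 2 := by
              linear_combination η ^ 2 * hsp ^ 2 * hb2
          _ < Ps0 * hp ^ 2 := hcond
          _ = (hp * c) ^ 2 := by linear_combination -hp ^ 2 * hc2
      nlinarith [mul_pos (mul_pos hη hhsp) hb0, mul_pos hhp hc0]
    have hba : (b - a) * (b + a) = β * Pp := by linear_combination hb2 - ha2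
    have hdc : (d - c) * (d + c) = β * η * Pp := by linear_combination hd2 - hc2
    have hsum1 : 0 < b + a := by linarith
    have hsum2 : 0 < d + c := by linarith
    have hβPp : 0 ≤ β * Pp := by positivity
    have step : η * hsp * (b + a) ≤ hp * (d + c) := by
      have t1 : η * hsp * a ≤ η * hsp * b :=
        mul_le_mul_of_nonneg_left hab (by positivity)
      have t2 : hp * c ≤ hp * d := mul_le_mul_of_nonneg_left hcd hhp.le
      nlinarith [key, t1, t2]
    have main : (d - c) * hsp * ((b + a) * (d + c)) ≤ (b - a) * hp * ((b + a) * (d + c)) := by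
      have l1 : (d - c) * hsp * ((b + a) * (d + c)) = β * η * Pp * hsp * (b + a) := by
        linear_combination (hsp * (b + a)) * hdc
      have l2 : (b - a) * hp * ((b + a) * (d + c)) = β * Pp * hp * (d + c) := by
        linear_combination (hp * (d + c)) * hba
      rw [l1, l2]
      calc β * η * Pp * hsp * (b + a) = β * Pp * (η * hsp * (b + a)) := by ring
        _ ≤ β * Pp * (hp * (d + c)) := mul_le_mul_of_nonneg_left step hβPp
        _ = β * Pp * hp * (d + c) := by ring
    have fin : (d - c) * hsp ≤ (b - a) * hp :=
      le_of_mul_le_mul_right main (by positivity)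
    calc a * hp + d * hsp
        = b * hp + c * hsp + ((d - c) * hsp - (b - a) * hp) := by ring
      _ ≤ b * hp + c * hsp := by linarith
  · norm_num
end

section
/- If P_p·η²·‖h_sp‖² ≥ P_{s0}·|h_p|² and |h_p| > 0, then the maximum of f(β)² where f(β) = √((1-β)P_p)·|h_p| + √(P_{s0} + β·η·P_p)·‖h_sp‖ over β ∈ [0,1] equals ((P_p·η + P_{s0})/(η²·‖h_sp‖² + η·|h_p|²))·(|h_p|² + η·‖h_sp‖²)², attained at the interior critical point β̄ = (P_p·η²·‖h_sp‖² − P_{s0}·|h_p|²)/(P_p·η²·‖h_sp‖² + η·P_p·|h_p|²), provided β̄ ≤ 1. -/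
private lemma cs_aux (η a b hp hsp : ℝ) (hη : 0 < η) :
    η * (a * hp + b * hsp) ^ 2 ≤ (η * a ^ 2 + b ^ 2) * (hp ^ 2 + η * hsp ^ 2) := by
  nlinarith [sq_nonneg (η * a * hsp - b * hp)]

theorem stmt_2 (Pp Ps0 η hp hsp : ℝ)
    (hPp : 0 < Pp) (hPs0 : 0 < Ps0) (hη : 0 < η)
    (hhp : 0 < hp) (hhsp : 0 < hsp)
    (hcond : Ps0 * hp ^ 2 ≤ Pp * η ^ 2 * hsp ^ 2)
    (hβle : (Pp * η ^ 2 * hsp ^ 2 - Ps0 * hp ^ 2) /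
        (Pp * η ^ 2 * hsp ^ 2 + η * Pp * hp ^ 2) ≤ 1) :
    IsMaxOn
      (fun β : ℝ => (Real.sqrt ((1 - β) * Pp) * hp + Real.sqrt (Ps0 + β * η * Pp) * hsp) ^ 2)
      (Set.Icc 0 1)
      ((Pp * η ^ 2 * hsp ^ 2 - Ps0 * hp ^ 2) / (Pp * η ^ 2 * hsp ^ 2 + η * Pp * hp ^ 2)) ∧
    (let β := (Pp * η ^ 2 * hsp ^ 2 - Ps0 * hp ^ 2) /
        (Pp * η ^ 2 * hsp ^ 2 + η * Pp * hp ^ 2);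
      (Real.sqrt ((1 - β) * Pp) * hp + Real.sqrt (Ps0 + β * η * Pp) * hsp) ^ 2
        = (Pp * η + Ps0) / (η ^ 2 * hsp ^ 2 + η * hp ^ 2) * (hp ^ 2 + η * hsp ^ 2) ^ 2) := by
  set β : ℝ := (Pp * η ^ 2 * hsp ^ 2 - Ps0 * hp ^ 2) /
      (Pp * η ^ 2 * hsp ^ 2 + η * Pp * hp ^ 2) with hβdef
  set K : ℝ := (Pp * η + Ps0) / (η * (η * hsp ^ 2 + hp ^ 2)) with hKdef
  have hden : (0:ℝ) < Pp * η ^ 2 * hsp ^ 2 + η * Pp * hp ^ 2 := by positivity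
  have hK : 0 < K := by
    apply div_pos (by positivity) (by positivity)
  have hE1 : (1 - β) * Pp = hp ^ 2 * K := by
    rw [hβdef, hKdef]
    field_simp
    ring
  have hE2 : Ps0 + β * η * Pp = η ^ 2 * hsp ^ 2 * K := by
    rw [hβdef, hKdef]
    field_simp
    ring
  have hs1 : Real.sqrt ((1 - β) * Pp) = hp * Real.sqrt K := by
    rw [hE1, show hp ^ 2 * K = (hp) ^ 2 * K by ring, Real.sqrt_mul (by positivity),
      Real.sqrt_sq hhp.le]
  have hs2 : Real.sqrt (Ps0 + β * η * Pp) = η * hsp * Real.sqrt K := by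
    rw [hE2, show η ^ 2 * hsp ^ 2 * K = (η * hsp) ^ 2 * K by ring,
      Real.sqrt_mul (by positivity), Real.sqrt_sq (by positivity)]
  have hKsq : Real.sqrt K ^ 2 = K := Real.sq_sqrt hK.le
  have hval : (Real.sqrt ((1 - β) * Pp) * hp + Real.sqrt (Ps0 + β * η * Pp) * hsp) ^ 2
      = K * (hp ^ 2 + η * hsp ^ 2) ^ 2 := by
    rw [hs1, hs2]
    nlinarith [hKsq]
  constructor
  · intro x hx
    simp only [Set.mem_Icc] at hx
    simp only [Set.mem_setOf_eq]
    have h1x : 0 ≤ (1 - x) * Pp := by nlinarith [hx.2]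
    have h2x : 0 ≤ Ps0 + x * η * Pp := by
      have := mul_nonneg (mul_nonneg hx.1 hη.le) hPp.le
      linarith
    set a := Real.sqrt ((1 - x) * Pp) with ha
    set b := Real.sqrt (Ps0 + x * η * Pp) with hb
    have ha2 : a ^ 2 = (1 - x) * Pp := Real.sq_sqrt h1x
    have hb2 : b ^ 2 = Ps0 + x * η * Pp := Real.sq_sqrt h2x
    have ha0 : 0 ≤ a := Real.sqrt_nonneg _
    have hb0 : 0 ≤ b := Real.sqrt_nonneg _
    have hCS := cs_aux η a b hp hsp hη
    have hsum : η * a ^ 2 + b ^ 2 = η * Pp + Ps0 := by rw [ha2, hb2]; ring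
    have hKeq : η * (K * (hp ^ 2 + η * hsp ^ 2) ^ 2) = (η * Pp + Ps0) * (hp ^ 2 + η * hsp ^ 2) := by
      rw [hKdef]; field_simp; ring
    rw [hval]
    have : η * (a * hp + b * hsp) ^ 2 ≤ η * (K * (hp ^ 2 + η * hsp ^ 2) ^ 2) := by
      rw [hKeq]; calc η * (a * hp + b * hsp) ^ 2
          ≤ (η * a ^ 2 + b ^ 2) * (hp ^ 2 + η * hsp ^ 2) := hCS
        _ = (η * Pp + Ps0) * (hp ^ 2 + η * hsp ^ 2) := by rw [hsum]
    exact le_of_mul_le_mul_left this hη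
  · simp only []
    rw [hval, hKdef]
    have : η ^ 2 * hsp ^ 2 + η * hp ^ 2 = η * (η * hsp ^ 2 + hp ^ 2) := by ring
    rw [this]
end

section
/- For the zero-forcing ideal cooperation scheme, the function g(β) = P_{s0} + β·P_p·(η + |h_p|²/‖h_sp‖²) − [(γ·N + P_p·|h_p|² − 2·√(γ·N)·√((1-β)·P_p)·|h_p|)/‖h_sp‖²] on [0,1] is maximized at β* = clamp(1 − γ·N / (P_p·(|h_p| + η·‖h_sp‖²/|h_p|)²), 0, 1), where γ = 2^{r_p} − 1. -/
set_option maxHeartbeats 1000000 in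


theorem stmt_3 (Pp Ps0 η N rp hp hsp : ℝ)
    (hPp : 0 < Pp) (hPs0 : 0 < Ps0) (hη : 0 < η) (hN : 0 < N) (hrp : 0 < rp)
    (hhp : 0 < hp) (hhsp : 0 < hsp) :
    let γ : ℝ := (2 : ℝ) ^ rp - 1
    IsMaxOn
      (fun β : ℝ => Ps0 + β * Pp * (η + hp ^ 2 / hsp ^ 2) -
        (γ * N + Pp * hp ^ 2 - 2 * Real.sqrt (γ * N) * Real.sqrt ((1 - β) * Pp) * hp) / hsp ^ 2)
      (Set.Icc 0 1)
      (min 1 (max 0 (1 - γ * N / (Pp * (hp + η * hsp ^ 2 / hp) ^ 2)))) := by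
  intro γ
  have hγ : 0 < γ := by
    have h1 : (1:ℝ) < (2:ℝ) ^ rp :=
      (Real.one_lt_rpow_iff_of_pos (by norm_num)).mpr (Or.inl ⟨one_lt_two, hrp⟩)
    show 0 < (2:ℝ) ^ rp - 1
    linarith
  have hγN : 0 < γ * N := mul_pos hγ hN
  set a : ℝ := Pp * (η + hp ^ 2 / hsp ^ 2) with ha_def
  set b : ℝ := 2 * Real.sqrt (γ * N) * Real.sqrt Pp * hp / hsp ^ 2 with hb_def
  set c : ℝ := γ * N / (Pp * (hp + η * hsp ^ 2 / hp) ^ 2) with hc_def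
  have ha : 0 < a := by rw [ha_def]; positivity
  have hb : 0 < b := by
    rw [hb_def]
    have h1 : 0 < Real.sqrt (γ * N) := Real.sqrt_pos.mpr hγN
    have h2 : 0 < Real.sqrt Pp := Real.sqrt_pos.mpr hPp
    positivity
  have hc0 : 0 < c := by
    rw [hc_def]
    have : 0 < hp + η * hsp ^ 2 / hp := by positivity
    positivity
  have hcb : c = b ^ 2 / (4 * a ^ 2) := by
    rw [hc_def, hb_def, ha_def]
    rw [div_pow, mul_pow, mul_pow, mul_pow, Real.sq_sqrt hγN.le, Real.sq_sqrt hPp.le]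
    field_simp
    ring
  clear_value γ a b c
  rw [isMaxOn_iff]
  intro x hx
  obtain ⟨hx0, hx1⟩ := hx

  have h1x : (0:ℝ) ≤ 1 - x := by linarith
  rw [Real.sqrt_mul h1x Pp]
  set s : ℝ := Real.sqrt (1 - x) with hs_def
  have hs0 : 0 ≤ s := Real.sqrt_nonneg _
  have hs2 : s ^ 2 = 1 - x := Real.sq_sqrt h1x
  clear_value s
  have e1 : Ps0 + x * Pp * (η + hp ^ 2 / hsp ^ 2) -
      (γ * N + Pp * hp ^ 2 - 2 * Real.sqrt (γ * N) * (s * Real.sqrt Pp) * hp) / hsp ^ 2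
      = (Ps0 - (γ * N + Pp * hp ^ 2) / hsp ^ 2) + (a * x + b * s) := by
    rw [ha_def, hb_def]
    field_simp
    ring
  rw [e1]
  by_cases hcase : c ≤ 1
  · -- clamp inactive: β₀ = 1 - c
    have hclamp : min 1 (max 0 (1 - c)) = 1 - c := by
      rw [max_eq_right (by linarith), min_eq_right (by linarith)]
    rw [hclamp]
    have hc1 : (1:ℝ) - (1 - c) = c := by ring
    rw [hc1, Real.sqrt_mul hc0.le Pp]
    set s₀ : ℝ := Real.sqrt c with hs₀_def
    have hs₀2 : s₀ ^ 2 = c := Real.sq_sqrt hc0.le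
    clear_value s₀
    have hs₀b : 2 * a * s₀ = b := by
      have : c = (b / (2 * a)) ^ 2 := by rw [hcb]; ring
      rw [hs₀_def, this, Real.sqrt_sq (by positivity), mul_comm]
      exact div_mul_cancel₀ b (by positivity)
    have e2 : Ps0 + (1 - c) * Pp * (η + hp ^ 2 / hsp ^ 2) -
        (γ * N + Pp * hp ^ 2 - 2 * Real.sqrt (γ * N) * (s₀ * Real.sqrt Pp) * hp) / hsp ^ 2
        = (Ps0 - (γ * N + Pp * hp ^ 2) / hsp ^ 2) + (a * (1 - c) + b * s₀) := by
      rw [ha_def, hb_def]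
      field_simp
      ring
    rw [e2]
    have hbs : b * s = 2 * a * s₀ * s := by rw [hs₀b]
    have hbs0 : b * s₀ = 2 * a * c := by
      rw [← hs₀b, ← hs₀2]; ring
    have key : a * x + b * s ≤ a * (1 - c) + b * s₀ := by
      nlinarith [mul_nonneg ha.le (sq_nonneg (s - s₀)), hs2, hbs, hbs0]
    linarith
  · -- clamp active: β₀ = 0
    push_neg at hcase
    have hclamp : min 1 (max 0 (1 - c)) = 0 := by
      rw [max_eq_left (by linarith), min_eq_right (by norm_num)]
    rw [hclamp]
    have hc1 : ((1:ℝ) - 0) * Pp = Pp := by ring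
    rw [hc1]
    have hb2a : 2 * a ≤ b := by
      have hbsq : 4 * a ^ 2 < b ^ 2 := by
        rw [hcb] at hcase
        have h4a : 0 < 4 * a ^ 2 := by positivity
        calc 4 * a ^ 2 = 1 * (4 * a ^ 2) := by ring
          _ < (b ^ 2 / (4 * a ^ 2)) * (4 * a ^ 2) := by
              exact mul_lt_mul_of_pos_right hcase h4a
          _ = b ^ 2 := div_mul_cancel₀ _ (by positivity)
      nlinarith [ha, hb, hbsq, sq_nonneg (b - 2 * a), sq_nonneg (b + 2 * a)]
    have hs1 : s ≤ 1 := by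
      rw [hs_def]; exact Real.sqrt_le_one.mpr (by linarith)
    have e2 : Ps0 + 0 * Pp * (η + hp ^ 2 / hsp ^ 2) -
        (γ * N + Pp * hp ^ 2 - 2 * Real.sqrt (γ * N) * Real.sqrt Pp * hp) / hsp ^ 2
        = (Ps0 - (γ * N + Pp * hp ^ 2) / hsp ^ 2) + (a * 0 + b * 1) := by
      rw [ha_def, hb_def]
      field_simp
      ring
    rw [e2]
    have key : a * x + b * s ≤ a * 0 + b * 1 := by
      nlinarith [mul_nonneg (by linarith : (0:ℝ) ≤ 1 - s) (by nlinarith : (0:ℝ) ≤ b - a * (1 + s)), hs2]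
    linarith
end

section
/- Let h_sp, h_s ∈ ℂᴺ be nonzero with Π = h_sp h_sp†/‖h_sp‖², and let q_s > 0, 0 ≤ λ ≤ 1. Assume Πh_s ≠ 0 and (I−Π)h_s ≠ 0. Then the vector w_s = √q_s·(√λ·Πh_s/‖Πh_s‖ + √(1−λ)·(I−Π)h_s/‖(I−Π)h_s‖) satisfies ‖w_s‖² = q_s, |h_sp†·w_s|² = λ·q_s·‖h_sp‖², and |h_s†·w_s| = √q_s·(√λ·‖Πh_s‖ + √(1−λ)·‖(I−Π)h_s‖). -/
theorem stmt_14 (N : ℕ) (hsp hs : EuclideanSpace ℂ (Fin N))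
    (hne1 : hsp ≠ 0) (hne2 : hs ≠ 0)
    (qs lam : ℝ) (hqs : 0 < qs) (hlam0 : 0 ≤ lam) (hlam1 : lam ≤ 1) :
    let Phs : EuclideanSpace ℂ (Fin N) := ((inner ℂ hsp hs : ℂ) / (‖hsp‖ ^ 2 : ℝ)) • hsp
    let Pperp : EuclideanSpace ℂ (Fin N) := hs - Phs
    Phs ≠ 0 → Pperp ≠ 0 →
    (let ws : EuclideanSpace ℂ (Fin N) :=
        (Real.sqrt qs : ℝ) • ((Real.sqrt lam / ‖Phs‖ : ℝ) • Phs +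
          (Real.sqrt (1 - lam) / ‖Pperp‖ : ℝ) • Pperp);
      ‖ws‖ ^ 2 = qs ∧
      ‖(inner ℂ hsp ws : ℂ)‖ ^ 2 = lam * qs * ‖hsp‖ ^ 2 ∧
      ‖(inner ℂ hs ws : ℂ)‖ = Real.sqrt qs *
        (Real.sqrt lam * ‖Phs‖ + Real.sqrt (1 - lam) * ‖Pperp‖)) := by
  intro Phs Pperp hP hQ ws
  set c : ℂ := (inner ℂ hsp hs : ℂ) / (‖hsp‖ ^ 2 : ℝ) with hc
  set a : ℝ := Real.sqrt lam / ‖Phs‖ with ha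
  set b : ℝ := Real.sqrt (1 - lam) / ‖Pperp‖ with hb
  have hPhs : Phs = c • hsp := rfl
  have hsplit : hs = Phs + Pperp := by simp [Pperp]
  have hws : ws = (Real.sqrt qs : ℂ) • ((a:ℂ) • Phs + (b:ℂ) • Pperp) := by
    show (Real.sqrt qs : ℝ) • ((a:ℝ) • Phs + (b:ℝ) • Pperp) = _
    rw [← Complex.coe_smul (Real.sqrt qs), ← Complex.coe_smul a, ← Complex.coe_smul b]
  clear_value Phs Pperp ws
  have hnsp : ‖hsp‖ ≠ 0 := norm_ne_zero_iff.mpr hne1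
  have hnsp' : (‖hsp‖ : ℂ) ≠ 0 := by exact_mod_cast hnsp
  have hnP : ‖Phs‖ ≠ 0 := norm_ne_zero_iff.mpr hP
  have hnQ : ‖Pperp‖ ≠ 0 := norm_ne_zero_iff.mpr hQ
  have hself : (inner ℂ hsp hsp : ℂ) = (‖hsp‖:ℂ)^2 := by
    rw [@inner_self_eq_norm_sq_to_K ℂ _ _ _ _ hsp]; rfl
  have hceq : c * (‖hsp‖:ℂ)^2 = inner ℂ hsp hs := by
    rw [hc]; push_cast; field_simp
  have horthsp : (inner ℂ hsp Pperp : ℂ) = 0 := by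
    have : Pperp = hs - c • hsp := by rw [← hPhs, hsplit]; abel
    rw [this, inner_sub_right, inner_smul_right, hself, hceq, sub_self]
  have horth : (inner ℂ Phs Pperp : ℂ) = 0 := by
    rw [hPhs, inner_smul_left, horthsp, mul_zero]
  have hipP : (inner ℂ hsp Phs : ℂ) = inner ℂ hsp hs := by
    rw [hPhs, inner_smul_right, hself, hceq]
  have ha0 : 0 ≤ a := div_nonneg (Real.sqrt_nonneg _) (norm_nonneg _)
  have hb0 : 0 ≤ b := div_nonneg (Real.sqrt_nonneg _) (norm_nonneg _)
  have hnu : ‖a • Phs‖ = Real.sqrt lam := by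
    rw [norm_smul, Real.norm_eq_abs, abs_of_nonneg ha0, ha]; field_simp
  have hnv : ‖b • Pperp‖ = Real.sqrt (1 - lam) := by
    rw [norm_smul, Real.norm_eq_abs, abs_of_nonneg hb0, hb]; field_simp
  have horthuv : (inner ℂ ((a:ℂ) • Phs) ((b:ℂ) • Pperp) : ℂ) = 0 := by
    rw [inner_smul_left, inner_smul_right, horth]; ring
  have hsum : ‖(a:ℂ) • Phs + (b:ℂ) • Pperp‖^2 = 1 := by
    rw [@norm_add_sq ℂ _ _ _ _, horthuv]
    simp only [map_zero, mul_zero, add_zero, zero_add]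
    rw [Complex.coe_smul a Phs, Complex.coe_smul b Pperp, hnu, hnv,
        Real.sq_sqrt hlam0, Real.sq_sqrt (by linarith)]
    ring
  refine ⟨?_, ?_, ?_⟩
  · rw [hws, norm_smul, mul_pow, hsum, Complex.norm_real, Real.norm_eq_abs,
      abs_of_nonneg (Real.sqrt_nonneg _), Real.sq_sqrt hqs.le, mul_one]
  · have hin : (inner ℂ hsp ws : ℂ) = (Real.sqrt qs : ℂ) * (a:ℂ) * inner ℂ hsp hs := by
      rw [hws]
      simp only [inner_smul_right, inner_add_right, horthsp, mul_zero, add_zero, hipP]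
      ring
    have hnin : ‖(inner ℂ hsp hs : ℂ)‖ = ‖Phs‖ * ‖hsp‖ := by
      have h1 : ‖Phs‖ = ‖c‖ * ‖hsp‖ := by rw [hPhs, norm_smul]
      have hcn : ‖c‖ = ‖(inner ℂ hsp hs : ℂ)‖ / ‖hsp‖^2 := by
        rw [hc, norm_div]; push_cast; simp [abs_of_nonneg (sq_nonneg ‖hsp‖)]
      rw [h1, hcn]; field_simp
    rw [hin, norm_mul, norm_mul, Complex.norm_real, Complex.norm_real, hnin,
      Real.norm_eq_abs, Real.norm_eq_abs, abs_of_nonneg (Real.sqrt_nonneg _),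
      abs_of_nonneg ha0, ha]
    field_simp
    rw [Real.sq_sqrt hlam0, Real.sq_sqrt hqs.le]
    ring
  · have h1 : (inner ℂ hs Phs : ℂ) = (‖Phs‖:ℂ)^2 := by
      rw [hsplit, inner_add_left, @inner_self_eq_norm_sq_to_K ℂ _ _ _ _ Phs,
        ← inner_conj_symm, horth, map_zero, add_zero]; rfl
    have h2 : (inner ℂ hs Pperp : ℂ) = (‖Pperp‖:ℂ)^2 := by
      rw [hsplit, inner_add_left, @inner_self_eq_norm_sq_to_K ℂ _ _ _ _ Pperp, horth, zero_add]
      rfl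
    have hin : (inner ℂ hs ws : ℂ) =
        ((Real.sqrt qs * (Real.sqrt lam * ‖Phs‖ + Real.sqrt (1 - lam) * ‖Pperp‖) : ℝ) : ℂ) := by
      have ea : a * ‖Phs‖^2 = Real.sqrt lam * ‖Phs‖ := by
        rw [ha]; field_simp
      have eb : b * ‖Pperp‖^2 = Real.sqrt (1 - lam) * ‖Pperp‖ := by
        rw [hb]; field_simp
      rw [hws]
      simp only [inner_smul_right, inner_add_right, h1, h2]
      rw [← ea, ← eb]
      push_cast
      ring
    rw [hin, Complex.norm_real, Real.norm_eq_abs, abs_of_nonneg]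
    positivity
end

section
/- Let a, N₀, N_C, c, b > 0 with Ñ₀ = N₀ + N_C and define f₁(ρ) = Ñ₀·(a + N_C/ρ)/(c·(b + a·η·(1−ρ))) + (N₀ + N_C/ρ) for ρ ∈ (0, 1]. If a²η·Ñ₀/N_C = (aη)²·c (the degenerate case A₁ = 0), then the minimizer of f₁ over (0,1] is ρ* = min(C₁/B₁, 1) where B₁ = 2aηN₀ + 2(b+aη)aηc and C₁ = N₀(b+aη) + c(b+aη)². -/
set_option maxHeartbeats 1000000 in
theorem stmt_16 (a b c η N0 NC : ℝ)
    (ha : 0 < a) (hb : 0 < b) (hc : 0 < c) (hη : 0 < η)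
    (hN0 : 0 < N0) (hNC : 0 < NC) :
    let Ntilde : ℝ := N0 + NC
    let f1 : ℝ → ℝ := fun ρ =>
      Ntilde * (a + NC / ρ) / (c * (b + a * η * (1 - ρ))) + (N0 + NC / ρ)
    let B1 : ℝ := 2 * a * η * N0 + 2 * (b + a * η) * a * η * c
    let C1 : ℝ := N0 * (b + a * η) + c * (b + a * η) ^ 2
    a ^ 2 * η * Ntilde / NC = (a * η) ^ 2 * c →
    IsMinOn f1 (Set.Ioc 0 1) (min (C1 / B1) 1) := by
  intro Ntilde f1 B1 C1 h
  -- From the degeneracy condition: N0 + NC = η * c * NC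
  have hNt : N0 + NC = η * c * NC := by
    have h' : a ^ 2 * η * Ntilde = (a * η) ^ 2 * c * NC := by
      field_simp at h; rw [h]; ring
    have : a ^ 2 * η * (N0 + NC) = a ^ 2 * η * (η * c * NC) := by
      simp only [Ntilde] at h'; nlinarith [h']
    have hpos : 0 < a ^ 2 * η := by positivity
    exact mul_left_cancel₀ (ne_of_gt hpos) this
  have hK : 0 < b + a * η := by positivity
  have hS : 0 < N0 + c * (b + a * η) := by positivity
  -- C1 / B1 = (b + a*η) / (2*a*η)
  have hCB : C1 / B1 = (b + a * η) / (2 * a * η) := by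
    have hC : C1 = (b + a * η) * (N0 + c * (b + a * η)) := by simp only [C1]; ring
    have hB : B1 = (2 * a * η) * (N0 + c * (b + a * η)) := by simp only [B1]; ring
    rw [hC, hB, mul_div_mul_right _ _ (ne_of_gt hS)]
  rw [isMinOn_iff]
  intro t ht
  obtain ⟨ht0, ht1⟩ := ht
  have hDt : 0 < b + a * η * (1 - t) := by nlinarith
  -- key difference identity, for any s with the right positivity
  have key : ∀ s : ℝ, 0 < s → 0 < b + a * η * (1 - s) →
      f1 t - f1 s = NC * (η * NC + (b + a * η)) * ((t - s) * (a * η * (t + s) - (b + a * η)))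
        / (t * s * (b + a * η * (1 - t)) * (b + a * η * (1 - s))) := by
    intro s hs0 hDs
    simp only [f1, Ntilde]
    rw [hNt]
    field_simp [hs0.ne', ht0.ne', hc.ne', (by linarith : 0 < b + η * a * (1 - s)).ne', (by linarith : 0 < b + η * a * (1 - t)).ne']
    ring
  rcases le_or_gt ((b + a * η) / (2 * a * η)) 1 with hle | hgt
  · rw [hCB, min_eq_left hle]
    set s : ℝ := (b + a * η) / (2 * a * η) with hsdef
    have h2a : 0 < 2 * a * η := by positivity
    have hs0 : 0 < s := by positivity
    have hs2 : a * η * s = (b + a * η) / 2 := by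
      rw [hsdef]; field_simp
    have hDs : 0 < b + a * η * (1 - s) := by nlinarith
    have hkey := key s hs0 hDs
    have hfac : a * η * (t + s) - (b + a * η) = a * η * (t - s) := by
      have : a * η * s = (b + a * η) / 2 := hs2
      nlinarith [this]
    rw [hfac] at hkey
    have hnum : 0 ≤ NC * (η * NC + (b + a * η)) * ((t - s) * (a * η * (t - s))) := by
      have e : (t - s) * (a * η * (t - s)) = a * η * (t - s) ^ 2 := by ring
      rw [e]; positivity
    have hden : 0 < t * s * (b + a * η * (1 - t)) * (b + a * η * (1 - s)) :=
      mul_pos (mul_pos (mul_pos ht0 hs0) hDt) hDs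
    have : 0 ≤ f1 t - f1 s := by rw [hkey]; exact div_nonneg hnum hden.le
    linarith
  · rw [hCB, min_eq_right (le_of_lt hgt)]
    have h2a : 0 < 2 * a * η := by positivity
    have hKgt : 2 * a * η < b + a * η := by
      rwa [lt_div_iff₀ h2a, one_mul] at hgt
    have hDs : 0 < b + a * η * (1 - 1) := by nlinarith
    have hkey := key 1 one_pos hDs
    have hnum : 0 ≤ NC * (η * NC + (b + a * η)) * ((t - 1) * (a * η * (t + 1) - (b + a * η))) := by
      have h1 : t - 1 ≤ 0 := by linarith
      have h2 : a * η * (t + 1) - (b + a * η) ≤ 0 := by nlinarith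
      have h3 : 0 ≤ (t - 1) * (a * η * (t + 1) - (b + a * η)) := mul_nonneg_of_nonpos_of_nonpos h1 h2
      exact mul_nonneg (by positivity) h3
    have hden : 0 < t * 1 * (b + a * η * (1 - t)) * (b + a * η * (1 - 1)) :=
      mul_pos (mul_pos (mul_pos ht0 one_pos) hDt) hDs
    have : 0 ≤ f1 t - f1 1 := by rw [hkey]; exact div_nonneg hnum hden.le
    linarith
end
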